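/- Let Γ denote the Gamma function and for H ∈ (1/2, 1) set c_H = √(2H·Γ(3/2−H) / (Γ(1/2+H)·Γ(2−2H))). Then for all real s < t, c_H² · ( ∫_s^t (t−q)^{2H−1} dq + ∫_{−∞}^s ((t−q)^{H−1/2} − (s−q)^{H−1/2})² dq ) = (t−s)^{2H}. -/

import Mathlib

open Real MeasureTheory Set
open Filter


lemma real_beta (p q : ℝ) (hp : 0 < p) (hq : 0 < q) :
    ∫ x in Ioo (0:ℝ) 1, x ^ (p-1) * (1-x) ^ (q-1) =
      Real.Gamma p * Real.Gamma q / Real.Gamma (p+q) := by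
  have hpq : (0:ℝ) < p + q := by linarith
  have key : Complex.Gamma p * Complex.Gamma q
      = Complex.Gamma (p + q) * Complex.betaIntegral p q := by
    have := Complex.Gamma_mul_Gamma_eq_betaIntegral (s := (p:ℂ)) (t := (q:ℂ))
      (by simpa using hp) (by simpa using hq)
    simpa using this
  have hbeta : Complex.betaIntegral p q
      = ((∫ x in Ioo (0:ℝ) 1, x ^ (p-1) * (1-x) ^ (q-1) : ℝ) : ℂ) := by
    rw [Complex.betaIntegral]
    rw [show ((∫ x in Ioo (0:ℝ) 1, x ^ (p-1) * (1-x) ^ (q-1) : ℝ) : ℂ)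
        = ((∫ x in (0:ℝ)..1, x ^ (p-1) * (1-x) ^ (q-1) : ℝ) : ℂ) by
      rw [intervalIntegral.integral_of_le zero_le_one, integral_Ioc_eq_integral_Ioo]]
    rw [← intervalIntegral.integral_ofReal]
    refine intervalIntegral.integral_congr (fun x hx => ?_)
    rw [uIcc_of_le zero_le_one] at hx
    push_cast
    rw [Complex.ofReal_cpow hx.1, Complex.ofReal_cpow (by linarith [hx.2] : (0:ℝ) ≤ 1 - x)]
    push_cast
    ring
  rw [hbeta, show ((p:ℂ)+(q:ℂ)) = ((p+q:ℝ):ℂ) by push_cast; ring,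
    Complex.Gamma_ofReal, Complex.Gamma_ofReal, Complex.Gamma_ofReal] at key
  have key2 : Real.Gamma p * Real.Gamma q
      = Real.Gamma (p+q) * ∫ x in Ioo (0:ℝ) 1, x ^ (p-1) * (1-x) ^ (q-1) := by
    exact_mod_cast key
  rw [key2]
  field_simp [(Real.Gamma_pos_of_pos hpq).ne']
lemma W_val {a : ℝ} (ha : 0 < a) (ha2 : a < 1/2) :
    ∫ u in Ioi (0:ℝ), u ^ (a-1) * (1+u) ^ (a-1) =
      Real.Gamma a * Real.Gamma (1-2*a) / Real.Gamma (1-a) := by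
  have himg : (fun x : ℝ => x / (1-x)) '' Ioo 0 1 = Ioi (0:ℝ) := by
    ext u
    constructor
    · rintro ⟨x, hx, rfl⟩
      exact div_pos hx.1 (by linarith [hx.2])
    · intro hu
      have hu' : (0:ℝ) < u := hu
      refine ⟨u / (1+u), ⟨div_pos hu' (by linarith), ?_⟩, ?_⟩
      · rw [div_lt_one (by linarith)]; linarith
      · have h1 : (1:ℝ) + u ≠ 0 := by positivity
        field_simp; ring
  have hderiv : ∀ x ∈ Ioo (0:ℝ) 1, HasDerivWithinAt (fun x : ℝ => x / (1-x))
      (((1-x)^2)⁻¹) (Ioo 0 1) x := by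
    intro x hx
    have h1 : (1:ℝ) - x ≠ 0 := by linarith [hx.2]
    have := (hasDerivAt_id x).div ((hasDerivAt_id x).const_sub 1) h1
    refine this.hasDerivWithinAt.congr_deriv ?_
    simp only [id_eq]
    field_simp; ring
  have hinj : InjOn (fun x : ℝ => x / (1-x)) (Ioo 0 1) := by
    intro x hx y hy h
    have h1 : (1:ℝ) - x ≠ 0 := by linarith [hx.2]
    have h2 : (1:ℝ) - y ≠ 0 := by linarith [hy.2]
    field_simp at h
    nlinarith [h]
  have := integral_image_eq_integral_abs_deriv_smul measurableSet_Ioo hderiv hinj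
    (fun u : ℝ => u ^ (a-1) * (1+u) ^ (a-1))
  rw [himg] at this
  rw [this]
  have congr1 : ∫ x in Ioo (0:ℝ) 1, |((1-x)^2)⁻¹| • ((x/(1-x)) ^ (a-1) * (1+x/(1-x)) ^ (a-1))
      = ∫ x in Ioo (0:ℝ) 1, x ^ (a-1) * (1-x) ^ ((1-2*a)-1) := by
    refine setIntegral_congr_fun measurableSet_Ioo (fun x hx => ?_)
    have hx0 : (0:ℝ) < x := hx.1
    have hx1 : (0:ℝ) < 1 - x := by linarith [hx.2]
    have e1 : (1:ℝ) + x/(1-x) = (1-x)⁻¹ := by field_simp; ring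
    have e2 : x/(1-x) = x * (1-x)⁻¹ := div_eq_mul_inv x _
    rw [smul_eq_mul, e1, e2, Real.mul_rpow hx0.le (by positivity),
      ← Real.rpow_neg_one (1-x), ← Real.rpow_natCast (1-x) 2, ← Real.rpow_neg hx1.le,
      ← Real.rpow_mul hx1.le]
    rw [abs_of_pos (Real.rpow_pos_of_pos hx1 _)]
    have key : ∀ r s : ℝ, (1-x)^r * (1-x)^s = (1-x)^(r+s) := fun r s => (Real.rpow_add hx1 r s).symm
    push_cast
    rw [show ((1-x) ^ (-(2:ℝ)) * (x ^ (a-1) * (1-x) ^ (-1*(a-1)) * (1-x) ^ (-1*(a-1))) : ℝ)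
      = x ^ (a-1) * ((1-x) ^ (-1*(a-1)) * (1-x) ^ (-1*(a-1)) * (1-x) ^ (-(2:ℝ))) by ring,
      key, key, show (-1*(a-1) + -1*(a-1) + -(2:ℝ)) = 1-2*a-1 by ring]
  rw [congr1]
  have := real_beta a (1-2*a) ha (by linarith)
  rw [show a + (1-2*a) = 1 - a by ring] at this
  rw [this]

lemma cont_rpow_on (c : ℝ) : ContinuousOn (fun u : ℝ => u ^ c) (Ioi 0) := fun x hx =>
  (Real.continuousAt_rpow_const x c (Or.inl (ne_of_gt hx))).continuousWithinAt

lemma cont_rpow_shift (c : ℝ) : ContinuousOn (fun u : ℝ => (1+u) ^ c) (Ioi (-1:ℝ)) := by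
  intro x hx
  exact ((Real.continuousAt_rpow_const (1+x) c (Or.inl (by simp only [mem_Ioi] at hx; intro h; linarith [h]))).comp
    ((continuous_const.add continuous_id).continuousAt)).continuousWithinAt

lemma g_cont {a : ℝ} (ha : 0 < a) : Continuous (fun u : ℝ => ((1+u) ^ a - u ^ a)^2) := by
  have h1 : Continuous (fun u : ℝ => u ^ a) :=
    continuous_iff_continuousAt.mpr (fun x => Real.continuousAt_rpow_const x a (Or.inr ha.le))
  exact ((h1.comp (continuous_const.add continuous_id)).sub h1).pow 2

lemma g_nonneg {a : ℝ} (ha : 0 < a) {u : ℝ} (hu : 0 ≤ u) : 0 ≤ (1+u) ^ a - u ^ a :=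
  sub_nonneg.mpr (Real.rpow_le_rpow hu (by linarith) ha.le)

lemma g_le {a : ℝ} (ha : 0 < a) (ha2 : a < 1/2) {u : ℝ} (hu : 0 < u) :
    (1+u) ^ a - u ^ a ≤ a * u ^ (a-1) := by
  have hiu : 0 < 1/u := by positivity
  have e1 : (1:ℝ) + u = u * (1 + 1/u) := by field_simp; ring
  have e2 : ((1:ℝ)+u) ^ a = u ^ a * (1+1/u) ^ a := by
    rw [e1, Real.mul_rpow hu.le (by positivity)]
  have e3 : (1+1/u) ^ a ≤ 1 + a * (1/u) :=
    rpow_one_add_le_one_add_mul_self (by linarith) ha.le (by linarith)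
  have e4 : u ^ a * (1/u) = u ^ (a-1) := by
    rw [Real.rpow_sub hu, Real.rpow_one]; field_simp
  have h5 : u ^ a * (1+1/u) ^ a ≤ u ^ a * (1 + a * (1/u)) := by
    apply mul_le_mul_of_nonneg_left e3 (Real.rpow_nonneg hu.le a)
  calc (1+u) ^ a - u ^ a ≤ u ^ a * (1 + a * (1/u)) - u ^ a := by rw [e2]; linarith
    _ = a * (u ^ a * (1/u)) := by ring
    _ = a * u ^ (a-1) := by rw [e4]

lemma int_gsq {a : ℝ} (ha : 0 < a) (ha2 : a < 1/2) :
    IntegrableOn (fun u : ℝ => ((1+u) ^ a - u ^ a)^2) (Ioi 0) := by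
  rw [← Ioc_union_Ioi_eq_Ioi (zero_le_one (α := ℝ))]
  refine ((g_cont ha).integrableOn_Ioc).union ?_
  refine Integrable.mono' ((integrableOn_Ioi_rpow_of_lt
    (show (2*a-2:ℝ) < -1 by linarith) one_pos).const_mul (a^2))
    ((g_cont ha).aestronglyMeasurable.restrict) ?_
  filter_upwards [ae_restrict_mem measurableSet_Ioi] with u hu
  have hu1 : (1:ℝ) < u := hu
  have hu0 : (0:ℝ) < u := by linarith
  have h1 : (1+u) ^ a - u ^ a ≤ a * u ^ (a-1) := g_le ha ha2 hu0
  have h0 : 0 ≤ (1+u) ^ a - u ^ a := g_nonneg ha hu0.le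
  rw [Real.norm_eq_abs, abs_of_nonneg (by positivity)]
  calc ((1+u) ^ a - u ^ a)^2 ≤ (a * u ^ (a-1))^2 := by gcongr
    _ = a^2 * (u ^ (a-1) * u ^ (a-1)) := by ring
    _ = a^2 * u ^ (2*a-2) := by
        rw [← Real.rpow_add hu0, show a-1+(a-1) = 2*a-2 by ring]

lemma w_meas {a : ℝ} : AEStronglyMeasurable (fun u : ℝ => u ^ (a-1) * (1+u) ^ (a-1))
    (volume.restrict (Ioi (0:ℝ))) := by
  refine ContinuousOn.aestronglyMeasurable ?_ measurableSet_Ioi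
  exact (cont_rpow_on (a-1)).mul ((cont_rpow_shift (a-1)).mono (fun x hx => by
    simp only [mem_Ioi] at *; linarith))

lemma int_w {a : ℝ} (ha : 0 < a) (ha2 : a < 1/2) :
    IntegrableOn (fun u : ℝ => u ^ (a-1) * (1+u) ^ (a-1)) (Ioi 0) := by
  rw [← Ioc_union_Ioi_eq_Ioi (zero_le_one (α := ℝ))]
  refine IntegrableOn.union ?_ ?_
  · -- on Ioc 0 1, bound by u^(a-1)
    refine Integrable.mono'
      ((intervalIntegrable_iff_integrableOn_Ioc_of_le zero_le_one).mp
        (intervalIntegral.intervalIntegrable_rpow' (by linarith : (-1:ℝ) < a-1)))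
      (w_meas.mono_measure (Measure.restrict_mono Ioc_subset_Ioi_self le_rfl)) ?_
    filter_upwards [ae_restrict_mem measurableSet_Ioc] with u hu
    have hu0 : (0:ℝ) < u := hu.1
    have h2 : (1+u) ^ (a-1) ≤ 1 :=
      Real.rpow_le_one_of_one_le_of_nonpos (by linarith) (by linarith)
    rw [Real.norm_eq_abs, abs_of_nonneg (by positivity)]
    calc u ^ (a-1) * (1+u) ^ (a-1) ≤ u ^ (a-1) * 1 :=
          mul_le_mul_of_nonneg_left h2 (Real.rpow_nonneg hu0.le _)
      _ = u ^ (a-1) := mul_one _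
  · refine Integrable.mono' (integrableOn_Ioi_rpow_of_lt
      (show (2*a-2:ℝ) < -1 by linarith) one_pos)
      (w_meas.mono_measure (Measure.restrict_mono (Ioi_subset_Ioi zero_le_one) le_rfl)) ?_
    filter_upwards [ae_restrict_mem measurableSet_Ioi] with u hu
    have hu1 : (1:ℝ) < u := hu
    have hu0 : (0:ℝ) < u := by linarith
    have h2 : (1+u) ^ (a-1) ≤ u ^ (a-1) :=
      Real.rpow_le_rpow_of_nonpos hu0 (by linarith) (by linarith)
    rw [Real.norm_eq_abs, abs_of_nonneg (by positivity)]
    calc u ^ (a-1) * (1+u) ^ (a-1) ≤ u ^ (a-1) * u ^ (a-1) :=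
          mul_le_mul_of_nonneg_left h2 (Real.rpow_nonneg hu0.le _)
      _ = u ^ (2*a-2) := by rw [← Real.rpow_add hu0, show a-1+(a-1) = 2*a-2 by ring]

lemma psi_deriv {a : ℝ} (ha : 0 < a) {x : ℝ} (hx : 0 < x) :
    HasDerivAt (fun u : ℝ => u*((1+u) ^ a - u ^ a)^2 + ((1+u) ^ (2*a) - u ^ a * (1+u) ^ a))
      ((2*a+1)*((1+x) ^ a - x ^ a)^2 - a*(x ^ (a-1) * (1+x) ^ (a-1))) x := by
  have hx1 : (0:ℝ) < 1 + x := by linarith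
  have h1 : HasDerivAt (fun u : ℝ => u ^ a) (a * x ^ (a-1)) x :=
    Real.hasDerivAt_rpow_const (Or.inl hx.ne')
  have hshift : HasDerivAt (fun u : ℝ => 1+u) 1 x := (hasDerivAt_id x).const_add 1
  have h2 : HasDerivAt (fun u : ℝ => (1+u) ^ a) (a * (1+x) ^ (a-1)) x := by
    have := (Real.hasDerivAt_rpow_const (p := a) (x := 1+x) (Or.inl hx1.ne')).comp x hshift
    simpa [Function.comp_def] using this
  have h3 : HasDerivAt (fun u : ℝ => (1+u) ^ (2*a)) (2*a * (1+x) ^ (2*a-1)) x := by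
    have := (Real.hasDerivAt_rpow_const (p := 2*a) (x := 1+x) (Or.inl hx1.ne')).comp x hshift
    simpa [Function.comp_def] using this
  have hg := (h2.sub h1).pow 2
  have hΨ := ((hasDerivAt_id x).mul hg).add (h3.sub (h1.mul h2))
  refine hΨ.congr_deriv ?_
  have hA : x ^ (a-1) * x = x ^ a := by
    rw [Real.rpow_sub hx, Real.rpow_one]; field_simp
  have hB : (1+x) ^ (a-1) * (1+x) = (1+x) ^ a := by
    rw [Real.rpow_sub hx1, Real.rpow_one]; field_simp
  have hC : (1+x) ^ (2*a) = (1+x) ^ a * (1+x) ^ a := by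
    rw [← Real.rpow_add hx1]; ring_nf
  have hD : (1+x) ^ (2*a-1) = (1+x) ^ a * (1+x) ^ (a-1) := by
    rw [← Real.rpow_add hx1]; ring_nf
  simp only [id_eq, Pi.sub_apply, Pi.pow_apply, Pi.mul_apply] at hΨ ⊢
  rw [hD, ← hA, ← hB]
  push_cast
  ring

lemma psi_tendsto {a : ℝ} (ha : 0 < a) (ha2 : a < 1/2) :
    Tendsto (fun u : ℝ => u*((1+u) ^ a - u ^ a)^2 + ((1+u) ^ (2*a) - u ^ a * (1+u) ^ a))
      atTop (nhds 0) := by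
  have hb : Tendsto (fun u : ℝ => (a^2 + 2 ^ a * a) * u ^ (2*a-1)) atTop (nhds 0) := by
    have h0 : Tendsto (fun u : ℝ => u ^ (-(1-2*a))) atTop (nhds 0) :=
      tendsto_rpow_neg_atTop (by linarith)
    have h0' := h0.const_mul (a^2 + 2 ^ a * a)
    rw [mul_zero] at h0'
    exact h0'.congr (fun u => by rw [show -(1-2*a) = 2*a-1 by ring])
  refine tendsto_of_tendsto_of_tendsto_of_le_of_le' (tendsto_const_nhds) hb ?_ ?_
  · filter_upwards [eventually_ge_atTop (1:ℝ)] with u hu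
    have hu0 : (0:ℝ) < u := by linarith
    have hg0 : 0 ≤ (1+u) ^ a - u ^ a :=
      sub_nonneg.mpr (Real.rpow_le_rpow hu0.le (by linarith) ha.le)
    have h2 : (1+u) ^ (2*a) - u ^ a * (1+u) ^ a = (1+u) ^ a * ((1+u) ^ a - u ^ a) := by
      rw [show 2*a = a + a by ring, Real.rpow_add (by linarith)]; ring
    rw [h2]
    positivity
  · filter_upwards [eventually_ge_atTop (1:ℝ)] with u hu
    have hu0 : (0:ℝ) < u := by linarith
    have hg0 : 0 ≤ (1+u) ^ a - u ^ a :=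
      sub_nonneg.mpr (Real.rpow_le_rpow hu0.le (by linarith) ha.le)
    have hgle : (1+u) ^ a - u ^ a ≤ a * u ^ (a-1) := g_le ha ha2 hu0
    have h2 : (1+u) ^ (2*a) - u ^ a * (1+u) ^ a = (1+u) ^ a * ((1+u) ^ a - u ^ a) := by
      rw [show 2*a = a + a by ring, Real.rpow_add (by linarith)]; ring
    have t1 : u * ((1+u) ^ a - u ^ a)^2 ≤ a^2 * u ^ (2*a-1) := by
      calc u * ((1+u) ^ a - u ^ a)^2 ≤ u * (a * u ^ (a-1))^2 := by
            apply mul_le_mul_of_nonneg_left _ hu0.le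
            exact pow_le_pow_left₀ hg0 hgle 2
        _ = a^2 * (u * (u ^ (a-1) * u ^ (a-1))) := by ring
        _ = a^2 * u ^ (2*a-1) := by
            rw [← Real.rpow_add hu0,
              ← Real.rpow_one_add' hu0.le (by rw [show 1+(a-1+(a-1)) = 2*a-1 by ring]; linarith),
              show 1+(a-1+(a-1)) = 2*a-1 by ring]
    have t2 : (1+u) ^ a * ((1+u) ^ a - u ^ a) ≤ 2 ^ a * a * u ^ (2*a-1) := by
      have hle : ((1:ℝ)+u) ^ a ≤ (2*u) ^ a :=
        Real.rpow_le_rpow (by linarith) (by linarith) ha.le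
      calc (1+u) ^ a * ((1+u) ^ a - u ^ a) ≤ (2*u) ^ a * (a * u ^ (a-1)) := by
            apply mul_le_mul hle hgle hg0 (Real.rpow_nonneg (by linarith) a)
        _ = 2 ^ a * a * (u ^ a * u ^ (a-1)) := by
            rw [Real.mul_rpow (by norm_num) hu0.le]; ring
        _ = 2 ^ a * a * u ^ (2*a-1) := by
            rw [← Real.rpow_add hu0]; ring_nf
    rw [h2]
    calc u * ((1+u) ^ a - u ^ a)^2 + (1+u) ^ a * ((1+u) ^ a - u ^ a)
        ≤ a^2 * u ^ (2*a-1) + 2 ^ a * a * u ^ (2*a-1) := add_le_add t1 t2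
      _ = (a^2 + 2 ^ a * a) * u ^ (2*a-1) := by ring

lemma J_val {a : ℝ} (ha : 0 < a) (ha2 : a < 1/2) :
    ∫ u in Ioi (0:ℝ), ((1+u) ^ a - u ^ a)^2 =
      (a * (Real.Gamma a * Real.Gamma (1-2*a) / Real.Gamma (1-a)) - 1) / (2*a+1) := by
  have hcontrpow : ∀ c : ℝ, 0 ≤ c → Continuous (fun u : ℝ => u ^ c) := fun c hc =>
    continuous_iff_continuousAt.mpr (fun x => Real.continuousAt_rpow_const x c (Or.inr hc))
  have hcont : ContinuousWithinAt
      (fun u : ℝ => u*((1+u) ^ a - u ^ a)^2 + ((1+u) ^ (2*a) - u ^ a * (1+u) ^ a))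
      (Ici 0) 0 := by
    refine Continuous.continuousWithinAt ?_
    have h1 := hcontrpow a ha.le
    have h2 := hcontrpow (2*a) (by linarith)
    exact (continuous_id.mul (g_cont ha)).add
      ((h2.comp (continuous_const.add continuous_id)).sub
        (h1.mul (h1.comp (continuous_const.add continuous_id))))
  have hint : IntegrableOn
      (fun x : ℝ => (2*a+1)*((1+x) ^ a - x ^ a)^2 - a*(x ^ (a-1) * (1+x) ^ (a-1))) (Ioi 0) :=
    ((int_gsq ha ha2).const_mul (2*a+1)).sub ((int_w ha ha2).const_mul a)
  have key := integral_Ioi_of_hasDerivAt_of_tendsto hcont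
    (fun x hx => psi_deriv ha hx) hint (psi_tendsto ha ha2)
  have hpsi0 : (0:ℝ)*((1+0) ^ a - 0 ^ a)^2 + ((1+0) ^ (2*a) - 0 ^ a * (1+0) ^ a) = 1 := by
    simp [Real.zero_rpow ha.ne']
  rw [hpsi0, zero_sub] at key
  rw [integral_sub ((int_gsq ha ha2).const_mul (2*a+1)) ((int_w ha ha2).const_mul a),
    integral_const_mul, integral_const_mul, W_val ha ha2] at key
  have h2a1 : (0:ℝ) < 2*a+1 := by linarith
  field_simp at key ⊢
  linarith [key]

noncomputable def cH (H : ℝ) : ℝ :=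
  Real.sqrt (2 * H * Real.Gamma (3/2 - H) / (Real.Gamma (1/2 + H) * Real.Gamma (2 - 2*H)))

theorem mvn_increment_variance (H : ℝ) (hH : H ∈ Set.Ioo (1/2 : ℝ) 1)
    (s t : ℝ) (hst : s < t) :
    (cH H)^2 *
      ((∫ q in Set.Ioc s t, (t - q) ^ (2*H - 1)) +
       (∫ q in Set.Iio s, ((t - q) ^ (H - 1/2) - (s - q) ^ (H - 1/2))^2))
      = (t - s) ^ (2*H) := by
  obtain ⟨hH1, hH2⟩ := hH
  have hc : 0 < t - s := by linarith
  set a : ℝ := H - 1/2 with ha_def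
  have ha : 0 < a := by rw [ha_def]; linarith
  have ha2 : a < 1/2 := by rw [ha_def]; linarith
  -- Part A
  have hA : (∫ q in Set.Ioc s t, (t - q) ^ (2*H - 1)) = (t-s)^(2*H) / (2*H) := by
    rw [← intervalIntegral.integral_of_le hst.le,
      intervalIntegral.integral_comp_sub_left (fun x : ℝ => x ^ (2*H-1)) t, sub_self,
      integral_rpow (Or.inl (by linarith : (-1:ℝ) < 2*H-1)),
      Real.zero_rpow (by intro h; nlinarith : (2*H-1+1:ℝ) ≠ 0),
      show (2*H-1+1:ℝ) = 2*H by ring]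
    ring
  -- Part B : change of variables q = s - (t-s) u
  have himg : (fun u : ℝ => s - (t-s)*u) '' Ioi 0 = Iio s := by
    ext q
    constructor
    · rintro ⟨u, hu, rfl⟩
      have hu' : (0:ℝ) < u := hu
      have : 0 < (t-s)*u := mul_pos hc hu'
      simp only [mem_Iio]; linarith
    · intro hq
      have hq' : q < s := hq
      refine ⟨(s - q)/(t-s), ?_, ?_⟩
      · exact div_pos (by linarith) hc
      · field_simp; ring
  have hderiv : ∀ u ∈ Ioi (0:ℝ), HasDerivWithinAt (fun u : ℝ => s - (t-s)*u) (-(t-s)) (Ioi 0) u := by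
    intro u hu
    have : HasDerivAt (fun u : ℝ => s - (t-s)*u) (-(t-s)) u := by
      simpa using (((hasDerivAt_id u).const_mul (t-s)).const_sub s)
    exact this.hasDerivWithinAt
  have hinj : InjOn (fun u : ℝ => s - (t-s)*u) (Ioi 0) := by
    intro x hx y hy h
    simp only at h
    have : (t-s)*x = (t-s)*y := by linarith
    exact mul_left_cancel₀ hc.ne' this
  have key := integral_image_eq_integral_abs_deriv_smul measurableSet_Ioi hderiv hinj
    (fun q : ℝ => ((t-q) ^ a - (s-q) ^ a)^2)
  rw [himg] at key
  have hcongr : ∫ u in Ioi (0:ℝ), |(-(t-s))| • ((t-(s - (t-s)*u)) ^ a - (s-(s - (t-s)*u)) ^ a)^2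
      = ∫ u in Ioi (0:ℝ), ((t-s)*((t-s) ^ a*(t-s) ^ a)) * ((1+u) ^ a - u ^ a)^2 := by
    refine setIntegral_congr_fun measurableSet_Ioi (fun u hu => ?_)
    have hu' : (0:ℝ) < u := hu
    rw [smul_eq_mul, abs_neg, abs_of_pos hc,
      show t-(s - (t-s)*u) = (t-s)*(1+u) by ring,
      show s-(s - (t-s)*u) = (t-s)*u by ring,
      Real.mul_rpow hc.le (by linarith), Real.mul_rpow hc.le hu'.le]
    ring
  have hfac : (t-s)*((t-s) ^ a*(t-s) ^ a) = (t-s)^(2*H) := by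
    rw [← Real.rpow_add hc, ← Real.rpow_one_add' hc.le
        (by rw [show (1:ℝ)+(a+a) = 2*H by rw [ha_def]; ring]; positivity),
      show (1:ℝ)+(a+a) = 2*H by rw [ha_def]; ring]
  have hB : (∫ q in Set.Iio s, ((t - q) ^ a - (s - q) ^ a)^2)
      = (t-s)^(2*H) * ∫ u in Ioi (0:ℝ), ((1+u) ^ a - u ^ a)^2 := by
    rw [key, hcongr, ← hfac, integral_const_mul]
  rw [hA, hB, J_val ha ha2]
  -- Gamma algebra
  have hG1 : Real.Gamma (1/2+H) = a * Real.Gamma a := by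
    rw [show (1/2+H : ℝ) = a + 1 by rw [ha_def]; ring, Real.Gamma_add_one ha.ne']
  have hG2 : (2 - 2*H : ℝ) = 1 - 2*a := by rw [ha_def]; ring
  have hG3 : (3/2 - H : ℝ) = 1 - a := by rw [ha_def]; ring
  have hGa : 0 < Real.Gamma a := Real.Gamma_pos_of_pos ha
  have hGb : 0 < Real.Gamma (1-2*a) := Real.Gamma_pos_of_pos (by linarith)
  have hGc : 0 < Real.Gamma (1-a) := Real.Gamma_pos_of_pos (by linarith)
  have hsq : (cH H)^2 = 2 * H * Real.Gamma (3/2 - H) / (Real.Gamma (1/2 + H) * Real.Gamma (2 - 2*H)) := by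
    rw [cH, Real.sq_sqrt]
    rw [hG1, hG2, hG3]
    positivity
  rw [hsq, hG1, hG2, hG3, show 2*H = 2*a+1 by rw [ha_def]; ring]
  have h2a1 : (0:ℝ) < 2*a+1 := by linarith
  field_simp
  ring
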